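/- Let P ≥ 1 be an integer and m ∈ (-1,1). Define v_{ji} = m(1-m)^{P-j} - m·[j ≤ i]·(1-m)^{i-j} for indices in 1,…,P, where [·] denotes the 0/1 indicator. Then for all 1 ≤ k ≤ l ≤ P, Σ_{i=1}^{P} v_{li} v_{ki} = (Pm² + 2m(1-m) - m(1-m)²/(2-m))·(1-m)^{2P-(k+l)} - m((1-m)^{P-k} + (1-m)^{P-l}) + (m/(2-m))·(1-m)^{l-k}. -/
import Mathlib


open BigOperators

/-- `v_{ji} = m (1-m)^{P-j} - m [j ≤ i] (1-m)^{i-j}` (one-based indices). -/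
noncomputable def vfun (P : ℕ) (m : ℝ) (j i : ℕ) : ℝ :=
  m * (1 - m) ^ (P - j) - m * (if j ≤ i then (1 : ℝ) else 0) * (1 - m) ^ (i - j)

/-- Closed form of `Σ_{i=1}^P v_{li} v_{ki}` for `1 ≤ k ≤ l ≤ P`, an intermediate identity
in the proof of the paper's linear-perturbation theorem. -/
theorem sum_v_mul_v
    (P : ℕ) (hP : 1 ≤ P) (m : ℝ) (hm : -1 < m) (hm' : m < 1) :
    ∀ k l : ℕ, 1 ≤ k → k ≤ l → l ≤ P →
      ∑ i ∈ Finset.Icc 1 P, vfun P m l i * vfun P m k i =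
        ((P : ℝ) * m ^ 2 + 2 * m * (1 - m) - m * (1 - m) ^ 2 / (2 - m)) *
            (1 - m) ^ (2 * P - (k + l))
          - m * ((1 - m) ^ (P - k) + (1 - m) ^ (P - l))
          + (m / (2 - m)) * (1 - m) ^ (l - k) := by
  intro k l hk hkl hlP
  have hkP : k ≤ P := le_trans hkl hlP
  rcases eq_or_ne m 0 with hm0 | hm0
  · subst hm0; simp [vfun]
  set a : ℝ := 1 - m with ha
  have hapos : 0 < a := by simp [ha]; linarith
  have ha1 : a ≠ 1 := by
    simp only [ha]; intro h; apply hm0; linarith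
  have ha2 : a ^ 2 ≠ 1 := by
    intro h
    have : a = 1 := by nlinarith
    exact ha1 this
  have key : ∀ j : ℕ, 1 ≤ j → j ≤ P → ∀ x : ℝ,
      ∑ i ∈ Finset.Icc 1 P, (if j ≤ i then (1:ℝ) else 0) * x ^ (i - j)
        = ∑ n ∈ Finset.range (P + 1 - j), x ^ n := by
    intro j hj hjP x
    have hIcc : Finset.Icc 1 P = Finset.Ico 1 (P+1) := (Finset.Ico_add_one_right_eq_Icc 1 P).symm
    rw [hIcc, ← Finset.sum_Ico_consecutive _ (show 1 ≤ j by omega) (show j ≤ P+1 by omega)]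
    have h1 : ∑ i ∈ Finset.Ico 1 j, (if j ≤ i then (1:ℝ) else 0) * x ^ (i-j) = 0 := by
      apply Finset.sum_eq_zero
      intro i hi
      simp only [Finset.mem_Ico] at hi
      rw [if_neg (by omega)]
      ring
    rw [h1, zero_add, Finset.sum_Ico_eq_sum_range]
    apply Finset.sum_congr rfl
    intro n _
    rw [if_pos (Nat.le_add_right j n)]
    simp
  have expand : ∀ i ∈ Finset.Icc 1 P, vfun P m l i * vfun P m k i =
      m^2 * a^(2*P - (k+l))
      - (m^2 * a^(P-l)) * ((if k ≤ i then (1:ℝ) else 0) * a^(i-k))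
      - (m^2 * a^(P-k)) * ((if l ≤ i then (1:ℝ) else 0) * a^(i-l))
      + (m^2 * a^(l-k)) * ((if l ≤ i then (1:ℝ) else 0) * (a^2)^(i-l)) := by
    intro i hi
    simp only [Finset.mem_Icc] at hi
    unfold vfun
    rw [← ha]
    have e1 : a^(P-k) = a^(P-l) * a^(l-k) := by
      rw [← pow_add]; congr 1; omega
    have e2 : a^(2*P-(k+l)) = a^(P-l) * a^(P-l) * a^(l-k) := by
      rw [← pow_add, ← pow_add]; congr 1; omega
    rcases le_or_gt l i with hli | hli
    · have hki : k ≤ i := le_trans hkl hli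
      rw [if_pos hli, if_pos hki]
      have e3 : a^(i-k) = a^(i-l) * a^(l-k) := by
        rw [← pow_add]; congr 1; omega
      have e4 : (a^2)^(i-l) = a^(i-l) * a^(i-l) := by
        rw [← pow_mul, ← pow_add]; congr 1; omega
      rw [e1, e2, e3, e4]; ring
    · rw [if_neg (by omega)]
      rcases le_or_gt k i with hki | hki
      · rw [if_pos hki]
        rw [e1, e2]; ring
      · rw [if_neg (by omega)]
        rw [e1, e2]; ring
  rw [Finset.sum_congr rfl expand]
  rw [Finset.sum_add_distrib, Finset.sum_sub_distrib, Finset.sum_sub_distrib,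
    ← Finset.mul_sum, ← Finset.mul_sum, ← Finset.mul_sum, ← Finset.mul_sum, Finset.sum_const,
    key k hk hkP a, key l (le_trans hk hkl) hlP a, key l (le_trans hk hkl) hlP (a^2),
    geom_sum_eq ha1, geom_sum_eq ha1, geom_sum_eq ha2, Nat.card_Icc, nsmul_eq_mul]
  have ex : a^(P+1-k) = a * (a^(P-l) * a^(l-k)) := by
    rw [← pow_add, ← pow_succ']; congr 1; omega
  have ey : a^(P+1-l) = a * a^(P-l) := by
    rw [← pow_succ']; congr 1; omega
  have ez : (a^2)^(P+1-l) = a^2 * (a^(P-l) * a^(P-l)) := by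
    rw [← pow_add, ← pow_add, ← pow_mul]; congr 1; omega
  have e1 : a^(P-k) = a^(P-l) * a^(l-k) := by
    rw [← pow_add]; congr 1; omega
  have e2 : a^(2*P-(k+l)) = a^(P-l) * a^(P-l) * a^(l-k) := by
    rw [← pow_add, ← pow_add]; congr 1; omega
  rw [ex, ey, ez, e1, e2]
  have hcard : ((P + 1 - 1 : ℕ) : ℝ) = (P : ℝ) := by
    norm_cast
  rw [hcard]
  have h2m : (2:ℝ) - m ≠ 0 := by intro h; linarith
  have ham1 : a - 1 = -m := by rw [ha]; ring
  have ha2m1 : a^2 - 1 = -(m * (2 - m)) := by rw [ha]; ring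
  rw [ham1, ha2m1, ha]
  set x := (1-m)^(P-l) with hx
  set y := (1-m)^(l-k) with hy
  field_simp [hm0, h2m]
  ring
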